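/- Let a, κ > 0 and define E_T(x₀) = (x₀^2 - a^2)^2 + κ x₀^2/(e^{2κT} - 1). If T ≤ T_c := -(1/(2κ)) log(2a²/(2a² + κ)), then x₀ = 0 is the unique global minimizer of E_T; if T > T_c, then E_T has exactly two global minimizers ±√(a² - κ/(2(e^{2κT} - 1))), and in particular E_T(0) > inf E_T. -/
import Mathlib


/-- For the small-noise OU process with initial rate function `(x²-a²)²`, the total cost
`E_T(x₀) = (x₀²-a²)² + κx₀²/(e^{2κT}-1)` has `0` as unique global minimizer iff
`T ≤ T_c = -(1/(2κ)) log(2a²/(2a²+κ))`; for `T > T_c` the global minimizers are exactly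
`±√(a² - κ/(2(e^{2κT}-1)))`, and in particular `E_T(0) > inf E_T`. -/
theorem stmt11 (a κ T : ℝ) (ha : 0 < a) (hκ : 0 < κ) (hT : 0 < T)
    (Tc : ℝ) (hTc : Tc = -(1 / (2 * κ)) * Real.log (2 * a ^ 2 / (2 * a ^ 2 + κ)))
    (E : ℝ → ℝ)
    (hE : ∀ x, E x = (x ^ 2 - a ^ 2) ^ 2 + κ * x ^ 2 / (Real.exp (2 * κ * T) - 1)) :
    (T ≤ Tc → (∀ x : ℝ, E 0 ≤ E x) ∧ (∀ x : ℝ, x ≠ 0 → E 0 < E x)) ∧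
    (Tc < T →
      {x : ℝ | ∀ y : ℝ, E x ≤ E y} =
        {Real.sqrt (a ^ 2 - κ / (2 * (Real.exp (2 * κ * T) - 1))),
         -Real.sqrt (a ^ 2 - κ / (2 * (Real.exp (2 * κ * T) - 1)))} ∧
      ∃ y : ℝ, E y < E 0) := by
  set D : ℝ := Real.exp (2 * κ * T) - 1 with hDdef
  have hD : 0 < D := by
    have : (1 : ℝ) < Real.exp (2 * κ * T) := by
      rw [show (1:ℝ) = Real.exp 0 by simp]
      exact Real.exp_lt_exp.mpr (by positivity)
    simpa [hDdef] using sub_pos.mpr this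
  have hA : (0:ℝ) < 2 * a ^ 2 := by positivity
  have hAκ : (0:ℝ) < 2 * a ^ 2 + κ := by positivity
  -- key equivalence: T ≤ Tc ↔ 2 a² D ≤ κ
  have key : T ≤ Tc ↔ 2 * a ^ 2 * D ≤ κ := by
    have hlog : Real.log (2 * a ^ 2 / (2 * a ^ 2 + κ)) =
        -Real.log ((2 * a ^ 2 + κ) / (2 * a ^ 2)) := by
      rw [← Real.log_inv, inv_div]
    rw [hTc, hlog]
    have h1 : -(1 / (2 * κ)) * -Real.log ((2 * a ^ 2 + κ) / (2 * a ^ 2)) =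
        Real.log ((2 * a ^ 2 + κ) / (2 * a ^ 2)) / (2 * κ) := by ring
    rw [h1, le_div_iff₀ (by positivity)]
    constructor
    · intro h
      have h2 : Real.exp (T * (2 * κ)) ≤ (2 * a ^ 2 + κ) / (2 * a ^ 2) :=
        (Real.le_log_iff_exp_le (by positivity)).mp h
      have h3 : Real.exp (2 * κ * T) * (2 * a ^ 2) ≤ 2 * a ^ 2 + κ := by
        rw [show 2 * κ * T = T * (2 * κ) by ring]
        exact (le_div_iff₀ hA).mp h2
      simp only [hDdef]; nlinarith
    · intro h
      rw [Real.le_log_iff_exp_le (by positivity), le_div_iff₀ hA,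
        show T * (2 * κ) = 2 * κ * T by ring]
      simp only [hDdef] at h; nlinarith
  have hc : ∀ x : ℝ, κ * x ^ 2 / D = (κ / D) * x ^ 2 := fun x => by
    field_simp
  constructor
  · intro hTle
    have h2 : 2 * a ^ 2 ≤ κ / D := (le_div_iff₀ hD).mpr (key.mp hTle)
    have hmain : ∀ x : ℝ, x ≠ 0 → E 0 < E x := by
      intro x hx
      rw [hE, hE, hc x, hc 0]
      have hx2 : 0 < x ^ 2 := by positivity
      nlinarith [sq_nonneg x, mul_le_mul_of_nonneg_right h2 (le_of_lt hx2)]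
    refine ⟨fun x => ?_, hmain⟩
    by_cases hx : x = 0
    · simp [hx]
    · exact le_of_lt (hmain x hx)
  · intro hTgt
    have h2 : κ < 2 * a ^ 2 * D := by
      by_contra h
      exact absurd (key.mpr (not_lt.mp h)) (not_le.mpr hTgt)
    set m : ℝ := a ^ 2 - κ / (2 * D) with hmdef
    have hm : 0 < m := by
      have : κ / (2 * D) < a ^ 2 := by
        rw [div_lt_iff₀ (by positivity)]; nlinarith
      simpa [hmdef] using sub_pos.mpr this
    set s : ℝ := Real.sqrt m with hsdef
    have hs : 0 < s := Real.sqrt_pos.mpr hm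
    have hs2 : s ^ 2 = m := Real.sq_sqrt (le_of_lt hm)
    have hE2 : ∀ x : ℝ, E x = (x ^ 2 - m) ^ 2 + (a ^ 4 - m ^ 2) := by
      intro x
      rw [hE, hc]
      have hκD : κ / D = 2 * a ^ 2 - 2 * m := by
        rw [hmdef]; field_simp; ring
      rw [hκD]; ring
    have hEs : E s = a ^ 4 - m ^ 2 := by rw [hE2, hs2]; ring
    constructor
    · ext x
      simp only [Set.mem_setOf_eq, Set.mem_insert_iff, Set.mem_singleton_iff]
      constructor
      · intro h
        have h1 := h s
        rw [hEs, hE2] at h1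
        have hx2 : x ^ 2 = m := by nlinarith [sq_nonneg (x ^ 2 - m)]
        have : (x - s) * (x + s) = 0 := by nlinarith
        rcases mul_eq_zero.mp this with h' | h'
        · left; linarith
        · right; linarith
      · intro h y
        have hx2 : x ^ 2 = m := by
          rcases h with h | h <;> rw [h] <;> [exact hs2; simpa using hs2]
        rw [hE2, hE2, hx2]
        nlinarith [sq_nonneg (y ^ 2 - m)]
    · refine ⟨s, ?_⟩
      rw [hEs, hE]
      norm_num
      nlinarith [mul_pos hm hm]
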